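/- Let K be a field, V a finite-dimensional K-vector space, ψ a nondegenerate bilinear form on V, f : V → V a linear endomorphism, and c ∈ K a nonzero scalar such that ψ(f x, f y) = c·ψ(x, y) for all x, y ∈ V. Then f is bijective and the characteristic polynomial of f equals the characteristic polynomial of c·f⁻¹; in particular, the multiset of roots of the characteristic polynomial of f (in any extension field where it splits) is stable under the involution α ↦ c/α. -/

import Mathlib

open Polynomial Matrix

universe u v

section Aux
variable {R S : Type*} [CommRing R] [CommRing S]

lemma charmatrix_transpose'' {n : Type*} [DecidableEq n] [Fintype n] (M : Matrix n n R) :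
    charmatrix Mᵀ = (charmatrix M)ᵀ := by
  ext i j
  rcases eq_or_ne i j with h | h
  · subst h; simp [charmatrix_apply]
  · simp [charmatrix_apply, Matrix.diagonal_apply_ne _ h, Matrix.diagonal_apply_ne _ h.symm]

lemma charpoly_transpose'' {n : Type*} [DecidableEq n] [Fintype n] (M : Matrix n n R) :
    Mᵀ.charpoly = M.charpoly := by
  rw [Matrix.charpoly, charmatrix_transpose'', Matrix.det_transpose, ← Matrix.charpoly]

lemma eval₂_charpoly_det {n : Type*} [DecidableEq n] [Fintype n]
    (M : Matrix n n R) (f : R →+* S) (x : S) :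
    Polynomial.eval₂ f x M.charpoly = (x • (1 : Matrix n n S) - M.map f).det := by
  have hmap : (charmatrix M).map (Polynomial.eval₂ f x) = x • (1 : Matrix n n S) - M.map f := by
    ext i j
    rcases eq_or_ne i j with h | h
    · subst h; simp [charmatrix_apply]
    · simp [charmatrix_apply, Matrix.diagonal_apply_ne _ h, Matrix.one_apply_ne h]
  rw [Matrix.charpoly, ← Polynomial.coe_eval₂RingHom, RingHom.map_det,
    RingHom.mapMatrix_apply, Polynomial.coe_eval₂RingHom, hmap]

lemma eval_charpoly_det' {n : Type*} [DecidableEq n] [Fintype n]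
    (M : Matrix n n R) (x : R) :
    Polynomial.eval x M.charpoly = (x • (1 : Matrix n n R) - M).det := by
  have h := eval₂_charpoly_det M (RingHom.id R) x
  rw [Polynomial.eval₂_eq_eval_map, Polynomial.map_id] at h
  simpa using h

lemma reverse_pow'' {R : Type*} [CommRing R] [IsDomain R] (q : R[X]) (m : ℕ) :
    (q ^ m).reverse = q.reverse ^ m := by
  induction m with
  | zero => simp [Polynomial.reverse]
  | succ k ih => rw [pow_succ, Polynomial.reverse_mul_of_domain, ih, pow_succ]

lemma scaleRoots_pow'' {R : Type*} [CommRing R] [NoZeroDivisors R] (q : R[X]) (s : R) (m : ℕ) :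
    (q ^ m).scaleRoots s = q.scaleRoots s ^ m := by
  induction m with
  | zero => simp [Polynomial.one_scaleRoots]
  | succ k ih => rw [pow_succ, Polynomial.mul_scaleRoots_of_noZeroDivisors, ih, pow_succ]

lemma reverse_X_sub_C'' {R : Type*} [CommRing R] [Nontrivial R] (β : R) :
    (X - C β).reverse = 1 - C β * X := by
  rw [Polynomial.reverse, Polynomial.natDegree_X_sub_C, Polynomial.reflect_sub]
  have h1 : Polynomial.reflect 1 (X : R[X]) = 1 := by
    rw [← pow_one (X : R[X]), Polynomial.reflect_monomial]
    simp
  have h2 : Polynomial.reflect 1 (C β : R[X]) = C β * X := by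
    rw [← mul_one (C β), ← pow_zero (X : R[X]),
      Polynomial.reflect_C_mul_X_pow]
    simp
  rw [h1, h2]

lemma scaleRoots_linear'' {F : Type*} [Field F] (β s : F) (hβ : β ≠ 0) :
    ((1 : F[X]) - C β * X).scaleRoots s = -C β * (X - C (s / β)) := by
  have hrhs : -C β * (X - C (s / β)) = C (-β) * X + C s := by
    have h1 : (C β : F[X]) * C (s / β) = C s := by
      rw [← Polynomial.C_mul, mul_div_cancel₀ _ hβ]
    calc -C β * (X - C (s / β)) = -(C β * X) + C β * C (s / β) := by ring
      _ = -(C β * X) + C s := by rw [h1]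
      _ = C (-β) * X + C s := by rw [map_neg]; ring
  have hlin : (1 : F[X]) - C β * X = C (-β) * X + C 1 := by
    rw [map_neg, _root_.map_one]; ring
  have hd : ((1 : F[X]) - C β * X).natDegree = 1 := by
    rw [hlin, Polynomial.natDegree_linear (neg_ne_zero.mpr hβ)]
  rw [hrhs]
  ext i
  rw [Polynomial.coeff_scaleRoots, hd]
  match i with
  | 0 => simp
  | 1 => simp [Polynomial.coeff_one]
  | (k + 2) => simp [Polynomial.coeff_one, Polynomial.coeff_C]

end Aux

set_option maxHeartbeats 1000000 in
set_option synthInstance.maxHeartbeats 400000 in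
theorem charpoly_self_eq_charpoly_smul_inv_of_similitude
    {K : Type u} {V : Type v} [Field K] [AddCommGroup V] [Module K V]
    [FiniteDimensional K V]
    (ψ : LinearMap.BilinForm K V) (hnd : ψ.Nondegenerate)
    (f : Module.End K V) (c : K) (hc : c ≠ 0)
    (hψ : ∀ x y : V, ψ (f x) (f y) = c * ψ x y) :
    Function.Bijective f ∧
    ∃ f' : Module.End K V, f' * f = 1 ∧ f * f' = 1 ∧
      f.charpoly = (c • f').charpoly ∧
      ∀ (L : Type u) [Field L] [Algebra K L],
        ((f.charpoly.map (algebraMap K L)).roots.map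
          fun α => algebraMap K L c / α) = (f.charpoly.map (algebraMap K L)).roots := by
  classical
  -- injectivity and bijectivity
  have hinj : Function.Injective f := by
    rw [← LinearMap.ker_eq_bot]
    rw [LinearMap.ker_eq_bot']
    intro x hx
    refine hnd.1 x fun y => ?_
    have h := hψ x y
    rw [hx] at h
    simp only [map_zero, LinearMap.zero_apply] at h
    exact (mul_eq_zero.mp h.symm).resolve_left hc
  have hbij : Function.Bijective f := ⟨hinj, (LinearMap.injective_iff_surjective).mp hinj⟩
  set e : V ≃ₗ[K] V := LinearEquiv.ofBijective f hbij with he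
  set f' : Module.End K V := (e.symm : V →ₗ[K] V) with hf'
  have hef : ∀ x, e x = f x := fun x => rfl
  have hf'f : f' * f = 1 := by
    ext x
    show e.symm (f x) = x
    rw [← hef]; exact e.symm_apply_apply x
  have hff' : f * f' = 1 := by
    ext x
    show f (e.symm x) = x
    rw [← hef]; exact e.apply_symm_apply x
  -- matrices
  set n : ℕ := Module.finrank K V with hn
  set b : Module.Basis (Fin n) K V := Module.finBasis K V with hb
  set A : Matrix (Fin n) (Fin n) K := LinearMap.toMatrix b b f with hA
  set B : Matrix (Fin n) (Fin n) K := LinearMap.toMatrix b b f' with hB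
  set G : Matrix (Fin n) (Fin n) K := LinearMap.toMatrix b b (c • f') with hG
  have hAB : A * B = 1 := by
    rw [hA, hB, ← LinearMap.toMatrix_mul, hff', LinearMap.toMatrix_one]
  have hBA : B * A = 1 := by
    rw [hA, hB, ← LinearMap.toMatrix_mul, hf'f, LinearMap.toMatrix_one]
  have hGA : G * A = c • 1 := by
    rw [hG, hA, ← LinearMap.toMatrix_mul]
    have : c • f' * f = c • (1 : Module.End K V) := by rw [smul_mul_assoc, hf'f]
    rw [this, _root_.map_smul, LinearMap.toMatrix_one]
  have hdetA : A.det ≠ 0 := by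
    intro h
    have := congrArg Matrix.det hAB
    rw [Matrix.det_mul, Matrix.det_one, h, zero_mul] at this
    exact zero_ne_one this
  set Ψ : Matrix (Fin n) (Fin n) K := BilinForm.toMatrix b ψ with hΨ
  have hdetΨ : Ψ.det ≠ 0 := (hnd.toMatrix b).det_ne_zero
  -- the bilinear-form relation in matrix terms
  have hcomp : ψ.compLeft f = ψ.compRight (c • f') := by
    ext x y
    show ψ (f x) y = ψ x ((c • f') y)
    have hy : f (f' y) = y := by
      have := congrArg (fun g : Module.End K V => g y) hff'
      simpa using this
    calc ψ (f x) y = ψ (f x) (f (f' y)) := by rw [hy]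
      _ = c * ψ x (f' y) := hψ _ _
      _ = ψ x ((c • f') y) := by
          rw [LinearMap.smul_apply, _root_.map_smul, smul_eq_mul]
  have hmat : Aᵀ * Ψ = Ψ * G := by
    have h1 := BilinForm.toMatrix_compLeft b ψ f
    have h2 := BilinForm.toMatrix_compRight b ψ (c • f')
    rw [← hA] at h1
    rw [← hG] at h2
    change _ = Aᵀ * Ψ at h1
    change _ = Ψ * G at h2
    rw [← h1, ← h2, hcomp]
  -- charpoly equality
  have hcharGA : G.charpoly = A.charpoly := by
    have key : charmatrix Aᵀ * Ψ.map C = Ψ.map C * charmatrix G := by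
      show (Matrix.scalar _ (X : K[X]) - (C : K →+* K[X]).mapMatrix Aᵀ) * Ψ.map C
          = Ψ.map C * (Matrix.scalar _ (X : K[X]) - (C : K →+* K[X]).mapMatrix G)
      rw [sub_mul, mul_sub, RingHom.mapMatrix_apply, RingHom.mapMatrix_apply,
        ← Matrix.map_mul, ← Matrix.map_mul, hmat]
      congr 1
      rw [Matrix.scalar_commute]
      · intro r; exact Commute.all _ _
    have hdet := congrArg Matrix.det key
    rw [Matrix.det_mul, Matrix.det_mul, ← Matrix.charpoly, ← Matrix.charpoly] at hdet
    have hdet2 : (Ψ.map (C : K →+* K[X])).det = C Ψ.det := by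
      rw [← RingHom.mapMatrix_apply, ← RingHom.map_det]
    rw [hdet2] at hdet
    have hC : (C (Ψ.det) : K[X]) ≠ 0 := by
      simpa using hdetΨ
    have key2 : C Ψ.det * G.charpoly = C Ψ.det * Aᵀ.charpoly := by
      rw [← hdet, mul_comm]
    rw [mul_left_cancel₀ hC key2, charpoly_transpose'']
  have hchar : f.charpoly = (c • f').charpoly := by
    rw [← LinearMap.charpoly_toMatrix f b, ← LinearMap.charpoly_toMatrix (c • f') b,
      ← hA, ← hG, hcharGA]
  -- the characteristic polynomial and its basic properties
  have hpA : f.charpoly = A.charpoly := (LinearMap.charpoly_toMatrix f b).symm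
  set p : K[X] := f.charpoly with hp
  have hpG : p = G.charpoly := by rw [hpA, hcharGA]
  have hpmonic : p.Monic := f.charpoly_monic
  have hpdeg : p.natDegree = n := by
    rw [hpA]
    simpa using A.charpoly_natDegree_eq_dim
  have hp0 : p.coeff 0 ≠ 0 := by
    rw [Polynomial.coeff_zero_eq_eval_zero, hpA, eval_charpoly_det']
    rw [zero_smul, zero_sub, Matrix.det_neg]
    simp only [Fintype.card_fin]
    exact mul_ne_zero (pow_ne_zero _ (neg_ne_zero.mpr one_ne_zero)) hdetA
  have htd0 : p.natTrailingDegree = 0 := Polynomial.natTrailingDegree_eq_zero.mpr (Or.inr hp0)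
  have hrevdeg : p.reverse.natDegree = n := by
    rw [Polynomial.reverse_natDegree, htd0, hpdeg]
    simp
  -- the key polynomial identity over K[X]
  have hkey : p * C (A.det * (-1) ^ n) = p.reverse.scaleRoots c := by
    apply IsFractionRing.injective K[X] (RatFunc K)
    set φ : K[X] →+* RatFunc K := (algebraMap K[X] (RatFunc K) : K[X] →+* RatFunc K) with hφ
    set alg : K →+* RatFunc K := (algebraMap K (RatFunc K) : K →+* RatFunc K) with halg
    set t : RatFunc K := φ X with ht
    have htne : t ≠ 0 := by
      rw [ht]
      intro h
      exact Polynomial.X_ne_zero ((IsFractionRing.injective K[X] (RatFunc K)) (by rw [map_zero]; exact h))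
    have hcne : alg c ≠ 0 := fun h =>
      hc ((algebraMap K (RatFunc K)).injective (by simpa using h))
    have hφeval : ∀ q : K[X], φ q = Polynomial.eval₂ alg t q := by
      have : φ = Polynomial.eval₂RingHom alg t := by
        apply Polynomial.ringHom_ext
        · intro a
          rw [Polynomial.coe_eval₂RingHom, Polynomial.eval₂_C]
          rw [← Polynomial.algebraMap_eq]
          exact (IsScalarTower.algebraMap_apply K K[X] (RatFunc K) a).symm
        · rw [Polynomial.coe_eval₂RingHom, Polynomial.eval₂_X, ht]
      intro q; rw [this, Polynomial.coe_eval₂RingHom]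
    set x : RatFunc K := alg c / t with hx
    have hxne : x ≠ 0 := div_ne_zero hcne htne
    set A₁ : Matrix (Fin n) (Fin n) (RatFunc K) := A.map alg with hA₁
    have hdetA₁ : A₁.det = alg A.det := by
      rw [hA₁, ← RingHom.mapMatrix_apply, ← RingHom.map_det]
    -- step 1: relate eval₂ at t with eval₂ at x
    have hstep1 : (t • (1 : Matrix (Fin n) (Fin n) (RatFunc K)) - G.map alg) * A₁
        = t • A₁ - alg c • 1 := by
      rw [sub_mul, Matrix.smul_mul, one_mul, hA₁, ← Matrix.map_mul, hGA]
      congr 1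
      ext i j
      rcases eq_or_ne i j with h | h
      · subst h; simp [Matrix.map_apply, Matrix.one_apply]
      · simp [Matrix.map_apply, Matrix.one_apply_ne h, h]
    have hstep3 : alg c • (1 : Matrix (Fin n) (Fin n) (RatFunc K)) - t • A₁
        = t • (x • 1 - A₁) := by
      rw [smul_sub, smul_smul, hx, mul_div_cancel₀ _ htne]
    -- the left-hand side computation
    have hL : Polynomial.eval₂ alg t p * alg A.det
        = (-1) ^ n * (t ^ n * Polynomial.eval₂ alg x p) := by
      have h1 : Polynomial.eval₂ alg t p = (t • (1 : Matrix (Fin n) (Fin n) (RatFunc K))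
          - G.map alg).det := by rw [hpG, eval₂_charpoly_det]
      have h2 : Polynomial.eval₂ alg x p = (x • (1 : Matrix (Fin n) (Fin n) (RatFunc K))
          - A₁).det := by rw [hpA, eval₂_charpoly_det, hA₁]
      have hd := congrArg Matrix.det hstep1
      rw [Matrix.det_mul, hdetA₁] at hd
      rw [h1, hd, show t • A₁ - alg c • (1 : Matrix (Fin n) (Fin n) (RatFunc K))
          = -(alg c • 1 - t • A₁) from (neg_sub _ _).symm, Matrix.det_neg, hstep3,
        Matrix.det_smul, h2]
      simp only [Fintype.card_fin]
    -- the right-hand side computation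
    haveI : Invertible x := invertibleOfNonzero hxne
    have hinvOf : ⅟x = t / alg c := by
      rw [invOf_eq_inv, hx, inv_div]
    have hrev := Polynomial.eval₂_reverse_mul_pow alg x p
    rw [hinvOf, hpdeg] at hrev
    have hsr := Polynomial.scaleRoots_eval₂_mul (p := p.reverse) alg (t / alg c) c
    rw [hrevdeg] at hsr
    have hts : alg c * (t / alg c) = t := by
      field_simp
    rw [hts] at hsr
    -- put everything together
    rw [hφeval, hφeval, Polynomial.eval₂_mul, Polynomial.eval₂_C, hsr]
    have : Polynomial.eval₂ alg t p * alg (A.det * (-1) ^ n)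
        = t ^ n * Polynomial.eval₂ alg x p := by
      rw [_root_.map_mul, map_pow, map_neg, _root_.map_one, ← mul_assoc, hL]
      ring_nf
      rw [mul_comm n 2, pow_mul, neg_one_sq, one_pow, mul_one]
    rw [this]
    -- alg c ^ n * eval₂ alg (t / alg c) p.reverse = t ^ n * eval₂ alg x p
    apply mul_right_cancel₀ (pow_ne_zero n hxne)
    calc t ^ n * Polynomial.eval₂ alg x p * x ^ n
        = t ^ n * x ^ n * Polynomial.eval₂ alg x p := by ring
      _ = alg c ^ n * Polynomial.eval₂ alg x p := by
          rw [← mul_pow, hx, mul_div_cancel₀ _ htne]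
      _ = alg c ^ n * (Polynomial.eval₂ alg (t / alg c) p.reverse * x ^ n) := by rw [hrev]
      _ = alg c ^ n * Polynomial.eval₂ alg (t / alg c) p.reverse * x ^ n := by ring
  refine ⟨hbij, f', hf'f, hff', hchar, ?_⟩
  intro L _ _
  set ρ : K →+* L := (algebraMap K L : K →+* L) with hρ
  have hρinj : Function.Injective ρ := ρ.injective
  set P : L[X] := p.map ρ with hPdef
  have hPmonic : P.Monic := hpmonic.map ρ
  have hPne : P ≠ 0 := hPmonic.ne_zero
  have hPdeg : P.natDegree = n := by rw [hPdef, hpmonic.natDegree_map, hpdeg]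
  have hP0 : P.coeff 0 ≠ 0 := by
    rw [hPdef, Polynomial.coeff_map]
    exact fun h => hp0 (hρinj (by simpa using h))
  have hcL : ρ c ≠ 0 := fun h => hc (hρinj (by simpa using h))
  set dd : L := ρ (A.det * (-1) ^ n) with hdd
  have hddne : dd ≠ 0 := by
    have h1 : A.det * (-1 : K) ^ n ≠ 0 :=
      mul_ne_zero hdetA (pow_ne_zero _ (neg_ne_zero.mpr one_ne_zero))
    rw [hdd]
    intro h
    exact h1 (hρinj (by simpa using h))
  have hrevmap : p.reverse.map ρ = P.reverse := by
    rw [Polynomial.reverse, Polynomial.reverse, Polynomial.reflect_map, hPdef,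
      hpmonic.natDegree_map]
  have hlead : ρ p.reverse.leadingCoeff ≠ 0 := by
    have htc : p.trailingCoeff = p.coeff 0 := by
      rw [Polynomial.trailingCoeff, htd0]
    rw [Polynomial.reverse_leadingCoeff, htc]
    exact fun h => hp0 (hρinj (by simpa using h))
  have hkeyL : P * C dd = P.reverse.scaleRoots (ρ c) := by
    have h := congrArg (Polynomial.map ρ) hkey
    rwa [Polynomial.map_mul, Polynomial.map_C, Polynomial.map_scaleRoots _ _ _ hlead,
      hrevmap] at h
  -- root multiplicity inequality
  have claim : ∀ β : L, β ≠ 0 →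
      P.rootMultiplicity β ≤ P.rootMultiplicity (ρ c / β) := by
    intro β hβ
    set m := P.rootMultiplicity β with hm
    obtain ⟨Q, hQ⟩ := Polynomial.pow_rootMultiplicity_dvd P β
    have hrevP : P.reverse = ((1 : L[X]) - C β * X) ^ m * Q.reverse := by
      rw [hQ, Polynomial.reverse_mul_of_domain, reverse_pow'', reverse_X_sub_C'']
    have hscale : P.reverse.scaleRoots (ρ c)
        = (-C β * (X - C (ρ c / β))) ^ m * Q.reverse.scaleRoots (ρ c) := by
      rw [hrevP, Polynomial.mul_scaleRoots_of_noZeroDivisors, scaleRoots_pow'',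
        scaleRoots_linear'' β (ρ c) hβ]
    have hdvd1 : (X - C (ρ c / β)) ^ m ∣ P.reverse.scaleRoots (ρ c) :=
      ⟨(-C β) ^ m * Q.reverse.scaleRoots (ρ c), by rw [hscale, mul_pow]; ring⟩
    have hdvd2 : (X - C (ρ c / β)) ^ m ∣ P := by
      have hPP : P = P * C dd * C dd⁻¹ := by
        rw [mul_assoc, ← Polynomial.C_mul, mul_inv_cancel₀ hddne, _root_.map_one, mul_one]
      rw [hPP, hkeyL]
      exact hdvd1.mul_right _
    exact (Polynomial.le_rootMultiplicity_iff hPne).mpr hdvd2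
  -- assemble the multiset identity
  set g : L → L := fun α => ρ c / α with hgdef
  have hg : Function.Involutive g := by
    intro α
    by_cases h : α = 0
    · simp [hgdef, h]
    · show ρ c / (ρ c / α) = α
      field_simp
  have hmult : ∀ β : L, P.rootMultiplicity (g β) = P.rootMultiplicity β := by
    have hle : ∀ β : L, P.rootMultiplicity β ≤ P.rootMultiplicity (g β) := by
      intro β
      by_cases hβ : β = 0
      · subst hβ
        simp [hgdef, div_zero]
      · exact claim β hβ
    intro β
    have h1 := hle β
    have h2 := hle (g β)
    rw [hg β] at h2
    omega
  show P.roots.map g = P.roots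
  refine Multiset.ext.mpr fun a => ?_
  conv_lhs => rw [← hg a]
  rw [Multiset.count_map_eq_count' g _ hg.injective, Polynomial.count_roots,
    Polynomial.count_roots, hmult]
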